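/- Let N be a square-free positive integer and let c, s be positive integers with 4sc a perfect square, say c = m·c₂² and s = m·s₂² with m = gcd(c,s) and r = ±2m·c₂·s₂. If N divides u²c + ur + s for some integer u, then N divides gcd(N,m)·(u·c₂ ± s₂). -/

import Mathlib

lemma key_sqf (N m k : ℤ) (hsq : Squarefree N) (h : N ∣ m * k ^ 2) :
    N ∣ (Int.gcd N m : ℤ) * k := by
  have hN0 : N ≠ 0 := hsq.ne_zero
  set d : ℤ := (Int.gcd N m : ℤ) with hd
  have hdN : d ∣ N := Int.gcd_dvd_left N m
  have hdm : d ∣ m := Int.gcd_dvd_right N m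
  obtain ⟨n, hn⟩ := hdN
  obtain ⟨m', hm'⟩ := hdm
  have hd0 : d ≠ 0 := by
    intro h0
    apply hN0
    rw [hn, h0, zero_mul]
  have hnk : n ∣ m' * k ^ 2 := by
    have : d * n ∣ d * (m' * k ^ 2) := by
      rw [← hn]
      calc N ∣ m * k ^ 2 := h
        _ = d * (m' * k ^ 2) := by rw [hm']; ring
    exact (mul_dvd_mul_iff_left hd0).mp this
  have hcop : IsCoprime n m' := by
    rw [Int.isCoprime_iff_gcd_eq_one]
    set g : ℤ := (Int.gcd n m' : ℤ) with hg
    have hgn : g ∣ n := Int.gcd_dvd_left n m'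
    have hgm' : g ∣ m' := Int.gcd_dvd_right n m'
    have hgd : g ∣ d := by
      apply Int.dvd_coe_gcd
      · exact hgn.trans ⟨d, by rw [hn]; ring⟩
      · exact hgm'.trans ⟨d, by rw [hm']; ring⟩
    have : g * g ∣ N := by
      rw [hn]
      exact mul_dvd_mul hgd hgn
    have hu := hsq g this
    rw [Int.isUnit_iff, hg] at hu
    have : (Int.gcd n m' : ℤ) = 1 := by omega
    exact_mod_cast this
  have hnk2 : n ∣ k ^ 2 := hcop.dvd_of_dvd_mul_left hnk
  have hsqn : Squarefree n := hsq.squarefree_of_dvd ⟨d, by rw [hn]; ring⟩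
  have hnk1 : n ∣ k := (hsqn.dvd_pow_iff_dvd two_ne_zero).mp hnk2
  rw [hn]
  exact mul_dvd_mul_left d hnk1

theorem squarefree_divisibility (N : ℕ) (hN : 0 < N) (hsqf : Squarefree N)
    (c s m c₂ s₂ r u : ℤ) (hc : 0 < c) (hs : 0 < s)
    (hm : m = Int.gcd c s) (hcm : c = m * c₂ ^ 2) (hsm : s = m * s₂ ^ 2)
    (hr : r = 2 * m * c₂ * s₂ ∨ r = -(2 * m * c₂ * s₂))
    (hdvd : (N : ℤ) ∣ u ^ 2 * c + u * r + s) :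
    (r = 2 * m * c₂ * s₂ → (N : ℤ) ∣ (Int.gcd (N : ℤ) m : ℤ) * (u * c₂ + s₂)) ∧
    (r = -(2 * m * c₂ * s₂) → (N : ℤ) ∣ (Int.gcd (N : ℤ) m : ℤ) * (u * c₂ - s₂)) := by
  have hsqZ : Squarefree (N : ℤ) := Int.squarefree_natCast.mpr hsqf
  constructor
  · intro hR
    apply key_sqf _ _ _ hsqZ
    have : u ^ 2 * c + u * r + s = m * (u * c₂ + s₂) ^ 2 := by
      rw [hcm, hsm, hR]; ring
    rwa [this] at hdvd
  · intro hR
    apply key_sqf _ _ _ hsqZ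
    have : u ^ 2 * c + u * r + s = m * (u * c₂ - s₂) ^ 2 := by
      rw [hcm, hsm, hR]; ring
    rwa [this] at hdvd
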